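/- arXiv:math/0204229 — 5 statements merged into one kernel-verified Lean document; each statement's English description precedes it below -/
import Mathlib

section
/- Let V be a finite-dimensional complex vector space, let N ∈ S(V,V*) have rank exactly k, and let M ∈ S(V,V*) be such that N + tM has rank at most k for every t ∈ ℂ. Then M maps the kernel of N into the image of N. -/
open Module LinearMap Polynomial Matrix in
theorem aux41 {V : Type*} [AddCommGroup V] [Module ℂ V]
    [FiniteDimensional ℂ V] (k : ℕ) (N M : V →ₗ[ℂ] Module.Dual ℂ V)
    (hNsym : ∀ x y : V, N x y = N y x)
    (hNrank : Module.finrank ℂ (LinearMap.range N) = k)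
    {u : V} (hu : N u = 0) (huu : M u u ≠ 0) :
    ∃ t : ℂ, k + 1 ≤ Module.finrank ℂ (LinearMap.range (N + t • M)) := by
  classical
  let bφ : Basis (Fin k) ℂ (LinearMap.range N) :=
    (Module.finBasis ℂ (LinearMap.range N)).reindex (finCongr hNrank)
  have hx : ∀ i, ∃ y, N y = (bφ i : Module.Dual ℂ V) := fun i => (bφ i).2
  choose x hx using hx
  have hspan : Submodule.span ℂ (Set.range fun i => ((bφ i : Module.Dual ℂ V)))
      = LinearMap.range N := by
    have h1 := bφ.span_eq
    have h2 := congrArg (Submodule.map (LinearMap.range N).subtype) h1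
    rwa [Submodule.map_span, Submodule.map_top, Submodule.range_subtype,
      ← Set.range_comp] at h2
  set A : Matrix (Fin k) (Fin k) ℂ := Matrix.of fun i j => N (x i) (x j) with hA
  have hdetA : A.det ≠ 0 := by
    intro hd
    obtain ⟨c, hc0, hcA⟩ := Matrix.exists_vecMul_eq_zero_iff.mpr hd
    set z := ∑ i, c i • x i with hz
    have hz' : N z = ∑ i, c i • (bφ i : Module.Dual ℂ V) := by
      simp [hz, map_sum, _root_.map_smul, hx]
    have hzr : ∀ j, N z (x j) = 0 := by
      intro j
      have h3 := congrFun hcA j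
      simpa [Matrix.vecMul, dotProduct, hz, map_sum, _root_.map_smul, hA] using h3
    have hall : ∀ φ ∈ LinearMap.range N, φ z = 0 := by
      intro φ hφ
      rw [← hspan] at hφ
      induction hφ using Submodule.span_induction with
      | mem w hw =>
          obtain ⟨i, rfl⟩ := hw
          show ((bφ i : Module.Dual ℂ V)) z = 0
          rw [← hx i, hNsym (x i) z]
          exact hzr i
      | zero => rfl
      | add f g _ _ hf hg => simp [hf, hg]
      | smul a f _ hf => simp [hf]
    have hNz : N z = 0 := by
      ext y
      have := hall (N y) (LinearMap.mem_range_self N y)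
      simpa [hNsym z y] using this
    have hli : LinearIndependent ℂ (fun i => (bφ i : Module.Dual ℂ V)) :=
      bφ.linearIndependent.map' (LinearMap.range N).subtype (Submodule.ker_subtype _)
    have hcz := Fintype.linearIndependent_iff.mp hli c (by rw [← hz', hNz])
    exact hc0 (funext hcz)
  set e : Fin k ⊕ Unit → V := Sum.elim x (fun _ => u) with he
  set GN : Matrix (Fin k ⊕ Unit) (Fin k ⊕ Unit) ℂ :=
    Matrix.of fun i j => N (e i) (e j) with hGN
  set GM : Matrix (Fin k ⊕ Unit) (Fin k ⊕ Unit) ℂ :=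
    Matrix.of fun i j => M (e i) (e j) with hGM
  set P : Matrix (Fin k ⊕ Unit) (Fin k ⊕ Unit) ℂ[X] :=
    Matrix.of fun i j => C (GN i j) + X * C (GM i j) with hP
  have hGNrow : ∀ j, GN (Sum.inr ()) j = 0 := by intro j; simp [hGN, he, hu]
  have hGNcol : ∀ i, GN (Sum.inl i) (Sum.inr ()) = 0 := by
    intro i
    have : N (x i) u = N u (x i) := hNsym (x i) u
    simp [hGN, he, this, hu]
  set Q := P.updateRow (Sum.inr ()) (fun j => C (GM (Sum.inr ()) j)) with hQ
  have hPQ : P = P.updateRow (Sum.inr ()) ((X : ℂ[X]) • (fun j => C (GM (Sum.inr ()) j) : Fin k ⊕ Unit → ℂ[X])) := by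
    ext i j
    by_cases hi : i = Sum.inr ()
    · subst hi
      rw [Matrix.updateRow_self]
      simp [hP, hGNrow, smul_eq_mul]
    · rw [Matrix.updateRow_ne hi]
  have hdetP : P.det = X * Q.det := by
    conv_lhs => rw [hPQ]
    rw [Matrix.det_updateRow_smul]
  have hQ0 : Q.det.eval 0 ≠ 0 := by
    have hmap : Q.map (Polynomial.evalRingHom (0 : ℂ)) =
        Matrix.fromBlocks A 0 (Matrix.of fun (_ : Unit) j => GM (Sum.inr ()) (Sum.inl j))
          (Matrix.of fun (_ : Unit) (_ : Unit) => M u u) := by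
      ext i j
      rcases i with i | i
      · have : Q (Sum.inl i) j = P (Sum.inl i) j := by
          rw [hQ, Matrix.updateRow_ne (by simp)]
        rcases j with j | j
        · simp [Matrix.map_apply, this, hP, hA, hGN, he]
        · simp [Matrix.map_apply, this, hP, hGNcol i]
      · have : Q (Sum.inr i) j = C (GM (Sum.inr ()) j) := by
          rw [hQ, Matrix.updateRow_self]
        rcases j with j | j
        · simp [Matrix.map_apply, this]
        · simp [Matrix.map_apply, this, hGM, he]
    have hdet : Q.det.eval 0 = A.det * M u u := by
      have := RingHom.map_det (Polynomial.evalRingHom (0 : ℂ)) Q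
      rw [RingHom.mapMatrix_apply] at this
      rw [← Polynomial.coe_evalRingHom, this, hmap, Matrix.det_fromBlocks_zero₁₂]
      congr 1
      simp [Matrix.det_unique]
    rw [hdet]
    exact mul_ne_zero hdetA huu
  have hPne : P.det ≠ 0 := by
    rw [hdetP]
    refine mul_ne_zero Polynomial.X_ne_zero fun hq => ?_
    rw [hq] at hQ0
    simp at hQ0
  have hex : ∃ t : ℂ, (P.det).eval t ≠ 0 := by
    by_contra hcon
    push_neg at hcon
    exact hPne (Polynomial.zero_of_eval_zero _ hcon)
  obtain ⟨t, ht⟩ := hex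
  refine ⟨t, ?_⟩
  set Gt : Matrix (Fin k ⊕ Unit) (Fin k ⊕ Unit) ℂ :=
    Matrix.of fun i j => ((N + t • M) (e i)) (e j) with hGt
  have hGtdet : Gt.det ≠ 0 := by
    have hmap : P.map (Polynomial.evalRingHom t) = Gt := by
      ext i j
      simp only [hP, hGt, Matrix.map_apply, Matrix.of_apply, Polynomial.coe_evalRingHom,
        Polynomial.eval_add, Polynomial.eval_mul, Polynomial.eval_C, Polynomial.eval_X,
        LinearMap.add_apply, LinearMap.smul_apply, smul_eq_mul, hGN, hGM]
    have := RingHom.map_det (Polynomial.evalRingHom t) P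
    rw [RingHom.mapMatrix_apply] at this
    rw [hGt] at hmap ⊢
    rw [← hmap, ← this]
    simpa using ht
  set f : Fin k ⊕ Unit → Module.Dual ℂ V := fun i => (N + t • M) (e i) with hf
  have hli : LinearIndependent ℂ f := by
    rw [Fintype.linearIndependent_iff]
    intro g hg i
    have hvm : g ᵥ* Gt = 0 := by
      funext j
      have h4 := congrArg (fun φ => φ (e j)) hg
      simpa [Matrix.vecMul, dotProduct, hf, hGt, smul_eq_mul, mul_add] using h4
    have hg0 : g = 0 := by
      by_contra hgne
      exact hGtdet (Matrix.exists_vecMul_eq_zero_iff.mp ⟨g, hgne, hvm⟩)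
    simp [hg0]
  have hsub : LinearIndependent ℂ fun i =>
      (⟨f i, LinearMap.mem_range_self _ (e i)⟩ :
        LinearMap.range (N + t • M)) := by
    apply LinearIndependent.of_comp (LinearMap.range (N + t • M)).subtype
    convert hli
    rfl
  have hcard := hsub.fintype_card_le_finrank
  simpa using hcard

/-- **Lemma 4.1 (variant).** Let `V` be a finite-dimensional complex vector space.
If `N ∈ S(V,V*)` has rank exactly `k`, and `M ∈ S(V,V*)` is such that `N + t • M` has rank
at most `k` for every `t ∈ ℂ`, then `M` maps the kernel of `N` into the image of `N`. -/
theorem oort_keel_sadun_lem_4_1 {V : Type*} [AddCommGroup V] [Module ℂ V]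
    [FiniteDimensional ℂ V] (k : ℕ) (N M : V →ₗ[ℂ] Module.Dual ℂ V)
    (hNsym : ∀ x y : V, N x y = N y x) (hMsym : ∀ x y : V, M x y = M y x)
    (hNrank : Module.finrank ℂ (LinearMap.range N) = k)
    (h : ∀ t : ℂ, Module.finrank ℂ (LinearMap.range (N + t • M)) ≤ k) :
    ∀ v ∈ LinearMap.ker N, M v ∈ LinearMap.range N := by
  intro v hv
  have hrange : LinearMap.range N = (LinearMap.ker N).dualAnnihilator := by
    apply Submodule.eq_of_le_of_finrank_le
    · rintro _ ⟨y, rfl⟩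
      rw [Submodule.mem_dualAnnihilator]
      intro w hw
      rw [hNsym y w, LinearMap.mem_ker.mp hw]
      rfl
    · -- finrank of dualAnnihilator = finrank of range
      have h1 : Module.finrank ℂ (LinearMap.ker N).dualAnnihilator
          = Module.finrank ℂ (V ⧸ (LinearMap.ker N)) :=
        (LinearEquiv.finrank_eq (Subspace.quotEquivAnnihilator (LinearMap.ker N))).symm
      have h2 : Module.finrank ℂ (V ⧸ (LinearMap.ker N))
          = Module.finrank ℂ (LinearMap.range N) :=
        LinearEquiv.finrank_eq (LinearMap.quotKerEquivRange N)
      rw [h1, h2]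
  rw [hrange, Submodule.mem_dualAnnihilator]
  by_contra hcon
  push_neg at hcon
  obtain ⟨w, hw, hMvw⟩ := hcon
  -- produce u ∈ ker N with M u u ≠ 0
  have key : ∃ u, N u = 0 ∧ M u u ≠ 0 := by
    by_cases hvv : M v v ≠ 0
    · exact ⟨v, LinearMap.mem_ker.mp hv, hvv⟩
    by_cases hww : M w w ≠ 0
    · exact ⟨w, LinearMap.mem_ker.mp hw, hww⟩
    push_neg at hvv hww
    refine ⟨v + w, ?_, ?_⟩
    · rw [map_add, LinearMap.mem_ker.mp hv, LinearMap.mem_ker.mp hw, add_zero]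
    · have : M (v + w) (v + w) = M v w + M v w := by
        simp [map_add, LinearMap.add_apply, hvv, hww, hMsym w v]
      rw [this]
      intro hzero
      apply hMvw
      have : (2 : ℂ) * M v w = 0 := by rw [two_mul]; exact hzero
      simpa using this
  obtain ⟨u, hu, huu⟩ := key
  obtain ⟨t, ht⟩ := aux41 k N M hNsym hNrank hu huu
  have := h t
  omega
end

section
/- Let V be a finite-dimensional complex vector space and let Y ⊆ S(V,V*) be a linear subspace all of whose elements have rank at most 2. Suppose M ∈ Y and v ∈ V satisfy M(v)(v) ≠ 0. Then every element of v^⊥ ∩ Y = {N ∈ Y : N(v) = 0} has rank at most 1, and the dimension of v^⊥ ∩ Y is at most 1. -/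
open Module LinearMap

section Aux

variable {V : Type*} [AddCommGroup V] [Module ℂ V]

private lemma aux_polar (N : V →ₗ[ℂ] Module.Dual ℂ V)
    (hsym : ∀ x y, N x y = N y x) (h : ∀ z, N z z = 0) : N = 0 := by
  ext a b
  have h1 := h (a + b)
  simp only [map_add, LinearMap.add_apply] at h1
  rw [h a, h b, hsym b a] at h1
  have : N a b = 0 := by linear_combination h1 / 2
  simpa using this

private lemma aux_rank_one [FiniteDimensional ℂ V] (N : V →ₗ[ℂ] Module.Dual ℂ V)
    (hsym : ∀ x y, N x y = N y x)
    (hq : ∀ x y, N x x * N y y = N x y * N x y) :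
    Module.finrank ℂ (LinearMap.range N) ≤ 1 := by
  by_cases hN : N = 0
  · subst hN
    rw [LinearMap.range_zero]
    simp
  · have hx : ∃ x, N x x ≠ 0 := by
      by_contra h
      push_neg at h
      exact hN (aux_polar N hsym h)
    obtain ⟨x, hxx⟩ := hx
    have hle : LinearMap.range N ≤ ℂ ∙ (N x) := by
      rintro _ ⟨y, rfl⟩
      set c := N x y / N x x with hc
      have hxy' : N x (y - c • x) = 0 := by
        simp only [map_sub, map_smul, hc, smul_eq_mul]
        field_simp
        ring
      have hyy' : N (y - c • x) (y - c • x) = 0 := by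
        have h1 := hq x (y - c • x)
        rw [hxy', mul_zero] at h1
        exact (mul_eq_zero.mp h1).resolve_left hxx
      have hy' : ∀ z, N (y - c • x) z = 0 := by
        intro z
        have h2 := hq (y - c • x) z
        rw [hyy', zero_mul] at h2
        exact mul_self_eq_zero.mp h2.symm
      have key : N (y - c • x) = 0 := by ext z; simpa using hy' z
      have : N y = c • N x := by
        rw [map_sub, map_smul, sub_eq_zero] at key
        exact key
      rw [this]
      exact Submodule.smul_mem _ _ (Submodule.mem_span_singleton_self _)
    calc Module.finrank ℂ (LinearMap.range N) ≤ Module.finrank ℂ (ℂ ∙ (N x)) :=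
          Submodule.finrank_mono hle
      _ ≤ 1 := by
          by_cases h : N x = 0
          · rw [h, Submodule.span_zero_singleton]
            simp
          · rw [finrank_span_singleton h]

private lemma aux_det_zero [FiniteDimensional ℂ V] (P : V →ₗ[ℂ] Module.Dual ℂ V)
    (hsym : ∀ x y, P x y = P y x)
    (hrank : Module.finrank ℂ (LinearMap.range P) ≤ 2)
    (w : Fin 3 → V) :
    (Matrix.of fun i j => P (w i) (w j)).det = 0 := by
  have hdep : ¬ LinearIndependent ℂ
      (fun i : Fin 3 => (⟨P (w i), LinearMap.mem_range_self P (w i)⟩ : LinearMap.range P)) := by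
    intro h
    have := LinearIndependent.fintype_card_le_finrank h
    simp at this
    omega
  obtain ⟨g, hg, i, hgi⟩ := Fintype.not_linearIndependent_iff.mp hdep
  rw [← Matrix.exists_mulVec_eq_zero_iff]
  refine ⟨g, Function.ne_iff.mpr ⟨i, hgi⟩, ?_⟩
  have hg' : ∑ j, g j • P (w j) = 0 := by
    have := congrArg (Submodule.subtype (LinearMap.range P)) hg
    simpa using this
  funext k
  have := congrArg (fun f => f (w k)) hg'
  simp only [LinearMap.sum_apply, LinearMap.smul_apply, smul_eq_mul, LinearMap.zero_apply] at this
  simp only [Matrix.mulVec, dotProduct, Matrix.of_apply, Pi.zero_apply]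
  rw [← this]
  congr 1
  ext j
  rw [hsym (w k) (w j)]
  ring

end Aux

/-- For `v ∈ V`, the subspace `v^⊥ ⊆ Hom(V, V*)` of maps `N` with `N(v) = 0`. -/
noncomputable def evalPerp {V : Type*} [AddCommGroup V] [Module ℂ V] (v : V) :
    Submodule ℂ (V →ₗ[ℂ] Module.Dual ℂ V) where
  carrier := {N | N v = 0}
  add_mem' := fun {a b} ha hb => by
    simp only [Set.mem_setOf_eq, LinearMap.add_apply] at *
    rw [ha, hb, add_zero]
  zero_mem' := rfl
  smul_mem' := fun c a ha => by
    simp only [Set.mem_setOf_eq, LinearMap.smul_apply] at *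
    rw [ha, smul_zero]

/-- **Lemma 4.3.** Let `V` be a finite-dimensional complex vector space and `Y ⊆ S(V,V*)`
a linear subspace all of whose elements have rank at most 2. Suppose `M ∈ Y` and `v ∈ V`
satisfy `M(v)(v) ≠ 0`. Then every element of `v^⊥ ∩ Y` has rank at most 1, and
`v^⊥ ∩ Y` has dimension at most 1. -/
theorem oort_keel_sadun_lem_4_3 {V : Type*} [AddCommGroup V] [Module ℂ V]
    [FiniteDimensional ℂ V]
    (Y : Submodule ℂ (V →ₗ[ℂ] Module.Dual ℂ V))
    (hYsym : ∀ M ∈ Y, ∀ x y : V, M x y = M y x)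
    (hYrank : ∀ M ∈ Y, Module.finrank ℂ (LinearMap.range M) ≤ 2)
    (M : V →ₗ[ℂ] Module.Dual ℂ V) (hMY : M ∈ Y) (v : V) (hMv : M v v ≠ 0) :
    (∀ N ∈ evalPerp v ⊓ Y, Module.finrank ℂ (LinearMap.range N) ≤ 1) ∧
      Module.finrank ℂ ↥(evalPerp v ⊓ Y) ≤ 1 := by
  -- The key quadratic condition for elements of `evalPerp v ⊓ Y`.
  have hqcond : ∀ N ∈ evalPerp v ⊓ Y, ∀ x y : V, N x x * N y y = N x y * N x y := by
    intro N hN x y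
    obtain ⟨hNv, hNY⟩ := hN
    have hNv : N v = 0 := hNv
    have hNsym := hYsym N hNY
    have hdet : ∀ t : ℂ,
        (Matrix.of fun i j => (M + t • N) (![v, x, y] i) (![v, x, y] j)).det = 0 := by
      intro t
      have hmem : M + t • N ∈ Y := Y.add_mem hMY (Y.smul_mem t hNY)
      exact aux_det_zero (M + t • N) (hYsym _ hmem) (hYrank _ hmem) _
    have h0 := hdet 0
    have h1 := hdet 1
    have h2 := hdet (-1)
    have hNxv : N x v = 0 := by rw [hNsym x v, hNv]; rfl
    have hNyv : N y v = 0 := by rw [hNsym y v, hNv]; rfl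
    have hNvx : N v x = 0 := by rw [hNv]; rfl
    have hNvy : N v y = 0 := by rw [hNv]; rfl
    have hNyx : N y x = N x y := hNsym y x
    simp only [Matrix.det_fin_three, Matrix.of_apply, Matrix.cons_val', Matrix.cons_val_zero,
      Matrix.empty_val', Matrix.cons_val_fin_one, Matrix.cons_val_one, Matrix.head_cons,
      Matrix.head_fin_const, Matrix.cons_val_two, Matrix.tail_cons, Matrix.head_val',
      LinearMap.add_apply, LinearMap.smul_apply, smul_eq_mul,
      hNv, hNxv, hNyv, hNvx, hNvy, hNyx, LinearMap.zero_apply] at h0 h1 h2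
    have hmain : M v v * (N x x * N y y - N x y * N x y) = 0 := by
      linear_combination (h1 + h2 - 2 * h0) / 2
    have h3 := (mul_eq_zero.mp hmain).resolve_left hMv
    linear_combination h3
  have part1 : ∀ N ∈ evalPerp v ⊓ Y, Module.finrank ℂ (LinearMap.range N) ≤ 1 := by
    intro N hN
    exact aux_rank_one N (hYsym N hN.2) (hqcond N hN)
  refine ⟨part1, ?_⟩
  -- Part 2
  by_cases hbot : evalPerp v ⊓ Y = ⊥
  · rw [hbot]; simp
  · obtain ⟨N₀, hN₀mem, hN₀ne⟩ := Submodule.exists_mem_ne_zero_of_ne_bot hbot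
    have hN₀sym := hYsym N₀ hN₀mem.2
    have hx : ∃ x, N₀ x x ≠ 0 := by
      by_contra h
      push_neg at h
      exact hN₀ne (aux_polar N₀ hN₀sym h)
    obtain ⟨x, hxx⟩ := hx
    -- the evaluation map N ↦ N x x on the subspace is injective linear
    set S := evalPerp v ⊓ Y with hS
    let Φ : S →ₗ[ℂ] ℂ :=
      { toFun := fun N => (N : V →ₗ[ℂ] Module.Dual ℂ V) x x
        map_add' := fun a b => by simp
        map_smul' := fun c a => by simp }
    have hinj : Function.Injective Φ := by
      rw [injective_iff_map_eq_zero]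
      rintro ⟨N, hNmem⟩ hNx
      have hNxx : N x x = 0 := hNx
      -- first: N x z = 0 for all z
      have hNxz : ∀ z, N x z = 0 := by
        intro z
        have := hqcond N hNmem x z
        rw [hNxx, zero_mul] at this
        exact mul_self_eq_zero.mp this.symm
      -- now use N₀ + N
      have hNzz : ∀ z, N z z = 0 := by
        intro z
        have hsum : N₀ + N ∈ S := S.add_mem hN₀mem hNmem
        have h1 := hqcond (N₀ + N) hsum x z
        have h2 := hqcond N₀ hN₀mem x z
        simp only [LinearMap.add_apply, hNxx, hNxz z, add_zero] at h1
        have : N₀ x x * N z z = 0 := by linear_combination h1 - h2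
        exact (mul_eq_zero.mp this).resolve_left hxx
      have : N = 0 := aux_polar N (hYsym N hNmem.2) hNzz
      exact Subtype.ext this
    calc Module.finrank ℂ ↥S ≤ Module.finrank ℂ ℂ :=
          LinearMap.finrank_le_finrank_of_injective hinj
      _ = 1 := Module.finrank_self ℂ
end

section
/- Let V be a finite-dimensional complex vector space and let i ∈ {1, 2}. There is no i-dimensional linear subspace Y ⊆ S(V,V*) such that for every nonzero v ∈ V the evaluation map e_v : Y → V* fails to be injective. -/
set_option maxHeartbeats 1000000 in
set_option synthInstance.maxHeartbeats 200000 in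
/-- **Proposition 4.4.** Let `V` be a finite-dimensional complex vector space and
`i ∈ {1, 2}`. There is no `i`-dimensional linear subspace `Y ⊆ S(V,V*)` such that for
every nonzero `v ∈ V` the evaluation map `e_v : Y → V*` fails to be injective. -/
theorem oort_keel_sadun_prop_4_4 {V : Type*} [AddCommGroup V] [Module ℂ V]
    [FiniteDimensional ℂ V] (i : ℕ) (hi : i = 1 ∨ i = 2) :
    ¬ ∃ Y : Submodule ℂ (V →ₗ[ℂ] Module.Dual ℂ V),
        (∀ M ∈ Y, ∀ x y : V, M x y = M y x) ∧
        Module.finrank ℂ Y = i ∧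
        ∀ v : V, v ≠ 0 →
          ¬ Function.Injective fun N : Y => (N : V →ₗ[ℂ] Module.Dual ℂ V) v := by
  rintro ⟨Y, hsym, hrank, hviol⟩
  -- from non-injectivity, get a nonzero element of Y killing v
  have hker : ∀ v : V, v ≠ 0 → ∃ N : Y, N ≠ 0 ∧ (N : V →ₗ[ℂ] Module.Dual ℂ V) v = 0 := by
    intro v hv
    obtain ⟨N₁, N₂, h12, hne⟩ := Function.not_injective_iff.mp (hviol v hv)
    refine ⟨N₁ - N₂, sub_ne_zero.mpr hne, ?_⟩
    simp only [Submodule.coe_sub, LinearMap.sub_apply]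
    rw [h12, sub_self]
  haveI : Module.Free ℂ Y := Module.Free.of_divisionRing ℂ Y
  rcases hi with hi | hi
  · -- case i = 1
    subst hi
    let b := Module.finBasisOfFinrankEq ℂ Y hrank
    set A : V →ₗ[ℂ] Module.Dual ℂ V := ((b 0 : Y) : V →ₗ[ℂ] Module.Dual ℂ V) with hA
    have hA0 : A ≠ 0 := by
      intro h
      exact Module.Basis.ne_zero b 0 (Subtype.ext h)
    apply hA0
    ext v
    by_cases hv : v = 0
    · simp [hv]
    obtain ⟨N, hN0, hNv⟩ := hker v hv
    have hrepY : N = b.repr N 0 • b 0 := by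
      have h := b.sum_repr N
      rw [Fin.sum_univ_one] at h
      exact h.symm
    have hr0 : b.repr N 0 ≠ 0 := by
      intro h
      apply hN0
      rw [hrepY, h, zero_smul]
    have : (b.repr N 0 • A) v = 0 := by
      rw [← hNv, hrepY]
      simp [hA]
    simp only [LinearMap.smul_apply, smul_eq_zero] at this
    rcases this with h | h
    · exact absurd h hr0
    · simp [h]
  · -- case i = 2
    subst hi
    let b := Module.finBasisOfFinrankEq ℂ Y hrank
    set A : V →ₗ[ℂ] Module.Dual ℂ V := ((b 0 : Y) : V →ₗ[ℂ] Module.Dual ℂ V) with hA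
    set B : V →ₗ[ℂ] Module.Dual ℂ V := ((b 1 : Y) : V →ₗ[ℂ] Module.Dual ℂ V) with hB
    have hAsym : ∀ x y : V, A x y = A y x := hsym _ (b 0).2
    have hBsym : ∀ x y : V, B x y = B y x := hsym _ (b 1).2
    -- dependence at each point
    have hdep : ∀ v x y : V, A v x * B v y = B v x * A v y := by
      intro v x y
      by_cases hv : v = 0
      · simp [hv]
      obtain ⟨N, hN0, hNv⟩ := hker v hv
      have hrepY : N = b.repr N 0 • b 0 + b.repr N 1 • b 1 := by
        have h := b.sum_repr N
        rw [Fin.sum_univ_two] at h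
        exact h.symm
      set p := b.repr N 0 with hp
      set q := b.repr N 1 with hq
      have hpq : p ≠ 0 ∨ q ≠ 0 := by
        by_contra h
        push_neg at h
        apply hN0
        rw [hrepY, h.1, h.2, zero_smul, zero_smul, add_zero]
      have hzero : ∀ z : V, p * A v z + q * B v z = 0 := by
        intro z
        have : ((p • A + q • B) v) z = 0 := by
          have hcoe : (N : V →ₗ[ℂ] Module.Dual ℂ V) = p • A + q • B := by
            rw [hrepY]; push_cast; rfl
          rw [← hcoe, hNv]; rfl
        simpa using this
      have keyp : p * (A v x * B v y) = p * (B v x * A v y) := by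
        linear_combination (B v y) * hzero x - (B v x) * hzero y
      have keyq : q * (A v x * B v y) = q * (B v x * A v y) := by
        linear_combination (A v x) * hzero y - (A v y) * hzero x
      rcases hpq with h | h
      · exact mul_left_cancel₀ h keyp
      · exact mul_left_cancel₀ h keyq
    -- polarization
    have polar : ∀ v w x y : V,
        A v x * B w y + A w x * B v y = B v x * A w y + B w x * A v y := by
      intro v w x y
      have h1 := hdep (v + w) x y
      have h2 := hdep v x y
      have h3 := hdep w x y
      simp only [map_add, LinearMap.add_apply] at h1
      linear_combination h1 - h2 - h3
    -- A ≠ 0, so find u with A u u ≠ 0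
    have hA0 : A ≠ 0 := fun h => Module.Basis.ne_zero b 0 (Subtype.ext h)
    have hu : ∃ u : V, A u u ≠ 0 := by
      by_contra h
      push_neg at h
      apply hA0
      ext x y
      have hxy := h (x + y)
      simp only [map_add, LinearMap.add_apply] at hxy
      have hs := hAsym x y
      simp only [LinearMap.zero_apply]
      linear_combination (hxy - h x - h y) / 2 + hs / 2
    obtain ⟨u, hu⟩ := hu
    set α := A u u with hα
    set β := B u u with hβ
    set c := β / α with hc
    have hBu : ∀ x : V, B u x = c * A u x := by
      intro x
      have h := hdep u x u
      rw [hc, div_mul_eq_mul_div, eq_div_iff hu]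
      linear_combination -h
    have hBv : ∀ v y : V, B v y = c * A v y := by
      intro v y
      have hp := polar v u u y
      have h1 : B u y = c * A u y := hBu y
      have h2 : B v u = c * A v u := by
        rw [hBsym v u, hBu v, hAsym u v]
      have key : α * B v y = β * A v y := by
        have hcα : c * α = β := div_mul_cancel₀ β hu
        linear_combination hp - A v u * h1 + A u y * h2
      rw [hc, div_mul_eq_mul_div, eq_div_iff hu]
      linear_combination key
    -- hence B = c • A, contradicting independence of the basis
    have hBA : b 1 = c • b 0 := by
      apply Subtype.ext
      push_cast
      ext v y
      simpa using hBv v y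
    have := congrArg (fun z => b.repr z 1) hBA
    simp only [Module.Basis.repr_self, map_smul] at this
    rw [Finsupp.smul_apply] at this
    simp [Finsupp.single_eq_of_ne'] at this
end

section
/- Let r ≥ 1 and s ≥ 0 be integers. Every homomorphism of real Lie algebras from sp(2r, ℝ) to u(s) is identically zero, where sp(2r, ℝ) is the real Lie algebra of 2r × 2r real matrices X satisfying Xᵗ J + J X = 0 for the standard symplectic matrix J, and u(s) is the real Lie algebra of skew-Hermitian s × s complex matrices. -/
open Matrix

attribute [local instance 100] LieRing.ofAssociativeRing

/-- The standard symplectic matrix `J = [[0, I_r], [−I_r, 0]]`, with rows and columns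
indexed by `Fin r ⊕ Fin r`. -/
noncomputable def stdSympJ (r : ℕ) : Matrix (Fin r ⊕ Fin r) (Fin r ⊕ Fin r) ℝ :=
  Matrix.fromBlocks 0 1 (-1) 0

/-- The real symplectic Lie algebra `sp(2r, ℝ)`: real `2r × 2r` matrices `X` with
`Xᵀ J + J X = 0`, where `J` is the standard symplectic matrix. -/
noncomputable def spLie (r : ℕ) :
    LieSubalgebra ℝ (Matrix (Fin r ⊕ Fin r) (Fin r ⊕ Fin r) ℝ) where
  carrier := {X | Xᵀ * stdSympJ r + stdSympJ r * X = 0}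
  add_mem' := fun {a b} ha hb => by
    simp only [Set.mem_setOf_eq] at *
    rw [Matrix.transpose_add, Matrix.add_mul, Matrix.mul_add,
      show aᵀ * stdSympJ r + bᵀ * stdSympJ r + (stdSympJ r * a + stdSympJ r * b) =
        (aᵀ * stdSympJ r + stdSympJ r * a) + (bᵀ * stdSympJ r + stdSympJ r * b) by abel,
      ha, hb, add_zero]
  zero_mem' := by
    simp only [Set.mem_setOf_eq, Matrix.transpose_zero, Matrix.zero_mul, Matrix.mul_zero,
      add_zero]
  smul_mem' := fun c a ha => by
    simp only [Set.mem_setOf_eq] at *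
    rw [Matrix.transpose_smul, Matrix.smul_mul, Matrix.mul_smul, ← smul_add, ha, smul_zero]
  lie_mem' := fun {x y} hx hy => by
    simp only [Set.mem_setOf_eq] at *
    have hx' : xᵀ * stdSympJ r = -(stdSympJ r * x) := eq_neg_of_add_eq_zero_left hx
    have hy' : yᵀ * stdSympJ r = -(stdSympJ r * y) := eq_neg_of_add_eq_zero_left hy
    rw [Ring.lie_def, Matrix.transpose_sub, Matrix.transpose_mul, Matrix.transpose_mul,
      Matrix.sub_mul, Matrix.mul_sub, Matrix.mul_assoc yᵀ xᵀ (stdSympJ r),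
      Matrix.mul_assoc xᵀ yᵀ (stdSympJ r), hx', hy', Matrix.mul_neg, Matrix.mul_neg,
      ← Matrix.mul_assoc yᵀ (stdSympJ r) x, ← Matrix.mul_assoc xᵀ (stdSympJ r) y,
      hx', hy', Matrix.neg_mul, Matrix.neg_mul, neg_neg, neg_neg,
      Matrix.mul_assoc, Matrix.mul_assoc]
    abel

/-- The real Lie algebra `u(s)` of skew-Hermitian `s × s` complex matrices. -/
noncomputable def uLie (s : ℕ) : LieSubalgebra ℝ (Matrix (Fin s) (Fin s) ℂ) where
  carrier := {A | Aᴴ = -A}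
  add_mem' := fun {a b} ha hb => by
    simp only [Set.mem_setOf_eq] at *
    rw [Matrix.conjTranspose_add, ha, hb, neg_add]
  zero_mem' := by simp
  smul_mem' := fun c a ha => by
    simp only [Set.mem_setOf_eq] at *
    rw [Matrix.conjTranspose_smul, ha, smul_neg, star_trivial]
  lie_mem' := fun {x y} hx hy => by
    simp only [Set.mem_setOf_eq] at *
    rw [Ring.lie_def, Matrix.conjTranspose_sub, Matrix.conjTranspose_mul,
      Matrix.conjTranspose_mul, hx, hy, Matrix.neg_mul, Matrix.mul_neg, neg_neg,
      Matrix.neg_mul, Matrix.mul_neg, neg_neg, neg_sub]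

section Aux
open ComplexOrder

lemma skewHerm_trace_sq_eq_zero {s : ℕ} {x : Matrix (Fin s) (Fin s) ℂ} (hx : xᴴ = -x)
    (h : trace (x * x) = 0) : x = 0 := by
  have hh : trace (xᴴ * x) = 0 := by
    rw [hx, Matrix.neg_mul, trace_neg, h, neg_zero]
  have h1 : ∀ j, (xᴴ * x) j j = dotProduct (star (fun i => x i j)) (fun i => x i j) := by
    intro j; simp [mul_apply, dotProduct, conjTranspose_apply]
  rw [Matrix.trace] at hh
  have h2 : ∀ j ∈ Finset.univ, Matrix.diag (xᴴ * x) j = 0 := by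
    refine (Finset.sum_eq_zero_iff_of_nonneg (fun j _ => ?_)).1 hh
    rw [Matrix.diag, h1 j]; exact dotProduct_star_self_nonneg _
  ext i j
  have := dotProduct_star_self_eq_zero.1 ((h1 j).symm.trans (h2 j (Finset.mem_univ j)))
  simpa using congrFun this i

lemma skewHerm_eigen_zero {s : ℕ} {h x : Matrix (Fin s) (Fin s) ℂ} (hx : xᴴ = -x)
    {c : ℝ} (hc : c ≠ 0) (heq : h * x - x * h = c • x) : x = 0 := by
  have ht : trace ((h * x - x * h) * x) = 0 := by
    rw [Matrix.sub_mul, trace_sub, Matrix.mul_assoc x h x, trace_mul_comm x (h * x), sub_self]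
  rw [heq, Matrix.smul_mul, trace_smul] at ht
  rcases smul_eq_zero.1 ht with h0 | h0
  · exact absurd h0 hc
  · exact skewHerm_trace_sq_eq_zero hx h0

end Aux

section Sp
variable {r : ℕ}

lemma mem_spLie_blocks (A B C : Matrix (Fin r) (Fin r) ℝ)
    (hB : Bᵀ = B) (hC : Cᵀ = C) : fromBlocks A B C (-Aᵀ) ∈ spLie r := by
  show _ᵀ * stdSympJ r + stdSympJ r * _ = 0
  rw [stdSympJ, fromBlocks_transpose, fromBlocks_multiply, fromBlocks_multiply,
    fromBlocks_add]
  simp [hB, hC]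

lemma spLie_blocks_iff {X : Matrix (Fin r ⊕ Fin r) (Fin r ⊕ Fin r) ℝ} (hX : X ∈ spLie r) :
    (X.toBlocks₁₂)ᵀ = X.toBlocks₁₂ ∧ (X.toBlocks₂₁)ᵀ = X.toBlocks₂₁ ∧
      X.toBlocks₂₂ = -(X.toBlocks₁₁)ᵀ := by
  have h : Xᵀ * stdSympJ r + stdSympJ r * X = 0 := hX
  rw [← fromBlocks_toBlocks X] at h
  rw [stdSympJ, fromBlocks_transpose, fromBlocks_multiply, fromBlocks_multiply,
    fromBlocks_add] at h
  have h0 : ∀ p q, (0 : Matrix (Fin r ⊕ Fin r) (Fin r ⊕ Fin r) ℝ) (Sum.inr p) (Sum.inr q) = 0 := fun _ _ => rfl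
  refine ⟨?_, ?_, ?_⟩
  · have h22 := congrArg Matrix.toBlocks₂₂ h
    simp only [toBlocks_fromBlocks₂₂] at h22
    have : X.toBlocks₁₂ᵀ + -X.toBlocks₁₂ = 0 := by
      simpa using h22.trans (by ext p q; exact h0 p q)
    simpa [sub_eq_add_neg] using eq_of_sub_eq_zero (by simpa [sub_eq_add_neg] using this)
  · have h11 := congrArg Matrix.toBlocks₁₁ h
    simp only [toBlocks_fromBlocks₁₁] at h11
    have : -X.toBlocks₂₁ᵀ + X.toBlocks₂₁ = 0 := by
      simpa using h11.trans (by ext p q; rfl)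
    have := eq_of_sub_eq_zero (by simpa [sub_eq_add_neg, add_comm] using this)
    simpa using this.symm
  · have h12 := congrArg Matrix.toBlocks₁₂ h
    simp only [toBlocks_fromBlocks₁₂] at h12
    have : X.toBlocks₁₁ᵀ + X.toBlocks₂₂ = 0 := by
      simpa using h12.trans (by ext p q; rfl)
    exact eq_neg_of_add_eq_zero_right this

end Sp

section Main
variable {r s : ℕ}

/-- The element `H0 = diag(1, -1)` of `sp(2r, ℝ)`. -/
noncomputable def spH0 (r : ℕ) : spLie r :=
  ⟨fromBlocks 1 0 0 (-1), by simpa using mem_spLie_blocks 1 0 0 transpose_zero transpose_zero⟩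

/-- Upper-right block element of `sp(2r, ℝ)` for symmetric `B`. -/
noncomputable def spU (B : Matrix (Fin r) (Fin r) ℝ) (hB : Bᵀ = B) : spLie r :=
  ⟨fromBlocks 0 B 0 0, by simpa using mem_spLie_blocks 0 B 0 hB transpose_zero⟩

/-- Lower-left block element of `sp(2r, ℝ)` for symmetric `C`. -/
noncomputable def spL (C : Matrix (Fin r) (Fin r) ℝ) (hC : Cᵀ = C) : spLie r :=
  ⟨fromBlocks 0 0 C 0, by simpa using mem_spLie_blocks 0 0 C transpose_zero hC⟩

/-- Block-diagonal embedding `A ↦ diag(A, -Aᵀ)` into `sp(2r, ℝ)`. -/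
noncomputable def spDiag (r : ℕ) : Matrix (Fin r) (Fin r) ℝ →ₗ[ℝ] spLie r where
  toFun A := ⟨fromBlocks A 0 0 (-Aᵀ), mem_spLie_blocks A 0 0 transpose_zero transpose_zero⟩
  map_add' A B := by
    ext1
    show fromBlocks (A + B) 0 0 (-(A + B)ᵀ) =
      fromBlocks A 0 0 (-Aᵀ) + fromBlocks B 0 0 (-Bᵀ)
    rw [fromBlocks_add]
    simp [transpose_add, neg_add, add_comm]
  map_smul' c A := by
    ext1
    show fromBlocks (c • A) 0 0 (-(c • A)ᵀ) = c • fromBlocks A 0 0 (-Aᵀ)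
    rw [fromBlocks_smul]
    simp

lemma bracket_H0_spU (B : Matrix (Fin r) (Fin r) ℝ) (hB : Bᵀ = B) :
    ⁅spH0 r, spU B hB⁆ = (2 : ℝ) • spU B hB := by
  ext1
  show fromBlocks 1 0 0 (-1) * fromBlocks 0 B 0 0 -
      fromBlocks 0 B 0 0 * fromBlocks 1 0 0 (-1) = (2 : ℝ) • fromBlocks 0 B 0 0
  rw [fromBlocks_multiply, fromBlocks_multiply, fromBlocks_smul]
  ext (i|i) (j|j) <;> simp [two_smul, fromBlocks]

lemma bracket_H0_spL (C : Matrix (Fin r) (Fin r) ℝ) (hC : Cᵀ = C) :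
    ⁅spH0 r, spL C hC⁆ = (-2 : ℝ) • spL C hC := by
  ext1
  show fromBlocks 1 0 0 (-1) * fromBlocks 0 0 C 0 -
      fromBlocks 0 0 C 0 * fromBlocks 1 0 0 (-1) = (-2 : ℝ) • fromBlocks 0 0 C 0
  rw [fromBlocks_multiply, fromBlocks_multiply, fromBlocks_smul]
  ext (i|i) (j|j) <;> simp [two_smul, fromBlocks] <;> ring

lemma bracket_spU_spL (B C : Matrix (Fin r) (Fin r) ℝ) (hB : Bᵀ = B) (hC : Cᵀ = C) :
    ⁅spU B hB, spL C hC⁆ = spDiag r (B * C) := by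
  ext1
  show fromBlocks 0 B 0 0 * fromBlocks 0 0 C 0 -
      fromBlocks 0 0 C 0 * fromBlocks 0 B 0 0 = fromBlocks (B * C) 0 0 (-(B * C)ᵀ)
  rw [fromBlocks_multiply, fromBlocks_multiply, transpose_mul, hB, hC]
  ext (i|i) (j|j) <;> simp [fromBlocks]

end Main

section Phi
variable {r s : ℕ} (φ : spLie r →ₗ⁅ℝ⁆ uLie s)

lemma transpose_stdBasisMatrix' {r : ℕ} (i j : Fin r) :
    (single i j (1 : ℝ))ᵀ = single j i 1 := by
  ext a b
  simp [single, transpose_apply, and_comm]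

lemma phi_eigen_zero {X H : spLie r} {c : ℝ} (hc : c ≠ 0) (hHX : ⁅H, X⁆ = c • X) :
    φ X = 0 := by
  have h1 : ⁅φ H, φ X⁆ = c • φ X := by rw [← LieHom.map_lie, hHX, map_smul]
  have h2 : (φ H : Matrix (Fin s) (Fin s) ℂ) * (φ X) -
      (φ X : Matrix (Fin s) (Fin s) ℂ) * (φ H) = c • (φ X : Matrix (Fin s) (Fin s) ℂ) := by
    have := congrArg Subtype.val h1
    simpa [Ring.lie_def] using this
  have hx : ((φ X : Matrix (Fin s) (Fin s) ℂ))ᴴ = -(φ X : Matrix (Fin s) (Fin s) ℂ) :=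
    (φ X).2
  ext1
  simpa using skewHerm_eigen_zero hx hc h2

lemma phi_spU (B : Matrix (Fin r) (Fin r) ℝ) (hB : Bᵀ = B) : φ (spU B hB) = 0 :=
  phi_eigen_zero φ two_ne_zero (bracket_H0_spU B hB)

lemma phi_spL (C : Matrix (Fin r) (Fin r) ℝ) (hC : Cᵀ = C) : φ (spL C hC) = 0 :=
  phi_eigen_zero φ (neg_ne_zero.2 two_ne_zero) (bracket_H0_spL C hC)

lemma phi_spDiag (A : Matrix (Fin r) (Fin r) ℝ) : φ (spDiag r A) = 0 := by
  have key : ∀ (B C : Matrix (Fin r) (Fin r) ℝ) (hB : Bᵀ = B) (hC : Cᵀ = C),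
      φ (spDiag r (B * C)) = 0 := by
    intro B C hB hC
    rw [← bracket_spU_spL B C hB hC, LieHom.map_lie, phi_spU, phi_spL, zero_lie]
  have hbasis : ∀ i j : Fin r, φ (spDiag r (single i j (1 : ℝ))) = 0 := by
    intro i j
    rcases eq_or_ne i j with rfl | hij
    · have := key (single i i 1) (single i i 1)
        (transpose_stdBasisMatrix' i i) (transpose_stdBasisMatrix' i i)
      rwa [single_mul_single_same, one_mul] at this
    · have := key (single i i 1) (single i j 1 + single j i 1)
        (transpose_stdBasisMatrix' i i)
        (by rw [transpose_add, transpose_stdBasisMatrix', transpose_stdBasisMatrix', add_comm])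
      rwa [Matrix.mul_add, single_mul_single_same, one_mul,
        single_mul_single_of_ne (h := hij), add_zero] at this
  have hcomp : (φ.toLinearMap.comp (spDiag r)) A = 0 := by
    conv_lhs => rw [matrix_eq_sum_single A]
    rw [map_sum]
    refine Finset.sum_eq_zero fun i _ => ?_
    rw [map_sum]
    refine Finset.sum_eq_zero fun j _ => ?_
    have h1 : single i j (A i j) = (A i j) • single i j (1 : ℝ) := by
      rw [smul_single, smul_eq_mul, mul_one]
    rw [h1, LinearMap.map_smul]
    simp only [LinearMap.comp_apply, LieHom.coe_toLinearMap]
    rw [hbasis i j, smul_zero]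
  simpa using hcomp

end Phi

/-- Every homomorphism of real Lie algebras from `sp(2r, ℝ)` to `u(s)` is identically
zero (`r ≥ 1`, `s ≥ 0`). -/
theorem sp_to_u_lieHom_eq_zero (r s : ℕ) (hr : 1 ≤ r)
    (φ : spLie r →ₗ⁅ℝ⁆ uLie s) : ∀ X, φ X = 0 := by
  intro X
  obtain ⟨hB, hC, hD⟩ := spLie_blocks_iff X.2
  have hX : X = spDiag r (X.val.toBlocks₁₁) + spU _ hB + spL _ hC := by
    ext1
    show X.val = fromBlocks _ 0 0 _ + fromBlocks 0 _ 0 0 + fromBlocks 0 0 _ 0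
    conv_lhs => rw [← fromBlocks_toBlocks X.val]
    rw [fromBlocks_add, fromBlocks_add]
    simp [hD]
  rw [hX, map_add, map_add, phi_spDiag, phi_spU, phi_spL, add_zero, add_zero]
end

section
/- Let n ≥ 0 and let V ⊆ ℂⁿ be a complex linear subspace such that σ(V) = V for every field automorphism σ of ℂ, where σ acts on ℂⁿ coordinatewise. Then V is spanned over ℂ by V ∩ ℚⁿ; equivalently, V is the extension of scalars to ℂ of a ℚ-linear subspace of ℚⁿ. -/
open Cardinal IntermediateField MvPolynomial

/-- Cardinality of an uncountable algebraically closed field equals that of any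
transcendence basis, provided the base ring is smaller. -/
theorem my_card_transcendence_basis {R K : Type} [CommRing R] [Nontrivial R] [Field K]
    [Algebra R K] [IsAlgClosed K] {ι : Type} (v : ι → K)
    (hv : IsTranscendenceBasis R v) (hR : #R < #K) (hK : ℵ₀ < #K) : #K = #ι := by
  refine le_antisymm ?_ (mk_le_of_injective hv.1.injective)
  have h := IsAlgClosed.cardinal_le_max_transcendence_basis v hv
  by_contra hlt
  push_neg at hlt
  exact absurd h (not_le.mpr (by
    refine max_lt (max_lt (by simpa using hR) (by simpa using hlt)) (by simpa using hK)))

/-- Extend an isomorphism of base rings of algebraically closed fields with equipotent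
transcendence bases to an isomorphism of the fields. -/
theorem my_extend_iso {R S K L : Type} [CommRing R] [CommRing S] [Field K] [Field L]
    [IsAlgClosed K] [IsAlgClosed L] [Algebra R K] [Algebra S L]
    (φ : R ≃+* S) {ι κ : Type} {v : ι → K} {w : κ → L} (e : ι ≃ κ)
    (hv : IsTranscendenceBasis R v) (hw : IsTranscendenceBasis S w) :
    ∃ σ : K ≃+* L, ∀ r : R, σ (algebraMap R K r) = algebraMap S L (φ r) := by
  letI := IsAlgClosed.isAlgClosure_of_transcendence_basis v hv
  letI := IsAlgClosed.isAlgClosure_of_transcendence_basis w hw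
  let E : Algebra.adjoin R (Set.range v) ≃+* Algebra.adjoin S (Set.range w) :=
    hv.1.aevalEquiv.symm.toRingEquiv.trans ((MvPolynomial.mapEquiv ι φ).trans
      (((MvPolynomial.renameEquiv S e).toRingEquiv).trans hw.1.aevalEquiv.toRingEquiv))
  refine ⟨IsAlgClosure.equivOfEquiv K L E, fun r => ?_⟩
  have h1 : algebraMap R K r =
      algebraMap (Algebra.adjoin R (Set.range v)) K (algebraMap R _ r) :=
    (IsScalarTower.algebraMap_apply R (Algebra.adjoin R (Set.range v)) K r)
  rw [h1, IsAlgClosure.equivOfEquiv_algebraMap]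
  have hE : E (algebraMap R _ r) = algebraMap S (Algebra.adjoin S (Set.range w)) (φ r) := by
    show hw.1.aevalEquiv ((MvPolynomial.renameEquiv S e)
      (MvPolynomial.mapEquiv ι φ (hv.1.aevalEquiv.symm (algebraMap R _ r)))) = _
    have h2 : hv.1.aevalEquiv.symm (algebraMap R _ r) = MvPolynomial.C r := by
      rw [← MvPolynomial.algebraMap_eq, AlgEquiv.symm_apply_eq, AlgEquiv.commutes]
    rw [h2]
    have h3 : MvPolynomial.mapEquiv ι φ (MvPolynomial.C r) = MvPolynomial.C (φ r) :=
      MvPolynomial.map_C _ r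
    rw [h3, MvPolynomial.renameEquiv_apply, MvPolynomial.rename_C,
      ← MvPolynomial.algebraMap_eq, AlgEquiv.commutes]
  rw [hE, ← IsScalarTower.algebraMap_apply]

/-- Any two embeddings of a small field into `ℂ` are conjugate by an automorphism of `ℂ`. -/
theorem my_ext_hom {F : Type} [Field F] (f g : F →+* ℂ) (hF : #F < #ℂ) :
    ∃ σ : ℂ ≃+* ℂ, ∀ a : F, σ (f a) = g a := by
  have hK : ℵ₀ < #ℂ := by rw [mk_complex]; exact Cardinal.aleph0_lt_continuum
  obtain ⟨s, hs⟩ := @exists_isTranscendenceBasis F ℂ _ _ f.toAlgebra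
    ((@faithfulSMul_iff_algebraMap_injective F ℂ _ _ f.toAlgebra).mpr f.injective)
  obtain ⟨t, ht⟩ := @exists_isTranscendenceBasis F ℂ _ _ g.toAlgebra
    ((@faithfulSMul_iff_algebraMap_injective F ℂ _ _ g.toAlgebra).mpr g.injective)
  have hcs : #ℂ = #s := @my_card_transcendence_basis F ℂ _ _ _ f.toAlgebra _ _ _ hs hF hK
  have hct : #ℂ = #t := @my_card_transcendence_basis F ℂ _ _ _ g.toAlgebra _ _ _ ht hF hK
  obtain ⟨e⟩ := Cardinal.eq.1 (hcs.symm.trans hct)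
  obtain ⟨σ, hσ⟩ := @my_extend_iso F F ℂ ℂ _ _ _ _ _ _ f.toAlgebra g.toAlgebra
    (RingEquiv.refl F) _ _ _ _ e hs ht
  exact ⟨σ, fun a => hσ a⟩

noncomputable abbrev Pu : Type := MvPolynomial Unit ℚ

noncomputable def ePu : Pu ≃ₐ[ℚ] Pu :=
  AlgEquiv.ofAlgHom (aeval (fun _ => X () + 1)) (aeval (fun _ => X () - 1))
    (by apply MvPolynomial.algHom_ext; intro i; cases i; simp)
    (by apply MvPolynomial.algHom_ext; intro i; cases i; simp)

@[simp] lemma ePu_X : ePu (X ()) = X () + 1 := by simp [ePu]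


theorem fixed_rational (x : ℂ) (h : ∀ σ : ℂ ≃+* ℂ, σ x = x) : ∃ q : ℚ, x = q := by
  by_contra hq
  push_neg at hq
  by_cases hx : IsAlgebraic ℚ x
  · -- algebraic case
    have hcard : #(ℚ⟮x⟯) < #ℂ := by
      have h1 := IntermediateField.cardinalMk_adjoin_le ℚ ({x} : Set ℂ)
      rw [mk_complex]
      refine lt_of_le_of_lt (h1.trans ?_) Cardinal.aleph0_lt_continuum
      simp [Cardinal.mk_denumerable, Cardinal.mk_singleton, Cardinal.one_le_aleph0]
    have hxint := hx.isIntegral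
    have hsep : (minpoly ℚ x).Separable := (minpoly.irreducible hxint).separable
    have hsplit : Polynomial.Splits ((minpoly ℚ x).map (algebraMap ℚ ℂ)) := IsAlgClosed.splits _
    have hcardroots : Fintype.card ((minpoly ℚ x).rootSet ℂ) = (minpoly ℚ x).natDegree :=
      Polynomial.card_rootSet_eq_natDegree hsep hsplit
    have hdeg1 : (minpoly ℚ x).natDegree ≠ 1 := by
      intro h1
      have hdeg : (minpoly ℚ x).degree = 1 := by
        rw [Polynomial.degree_eq_natDegree (minpoly.ne_zero hxint), h1, Nat.cast_one]
      obtain ⟨q, hq'⟩ := RingHom.mem_range.mp (minpoly.degree_eq_one_iff.mp hdeg)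
      exact hq q (by rw [← hq', eq_ratCast (algebraMap ℚ ℂ) q])
    have h1lt : 1 < (minpoly ℚ x).natDegree :=
      lt_of_le_of_ne (minpoly.natDegree_pos hxint) (Ne.symm hdeg1)
    have hx_mem : x ∈ (minpoly ℚ x).rootSet ℂ :=
      Polynomial.mem_rootSet.mpr ⟨minpoly.ne_zero hxint, minpoly.aeval ℚ x⟩
    obtain ⟨b, hb⟩ := Fintype.exists_ne_of_one_lt_card (by rw [hcardroots]; exact h1lt)
      (⟨x, hx_mem⟩ : (minpoly ℚ x).rootSet ℂ)
    have hyx : (b : ℂ) ≠ x := fun hbx => hb (Subtype.ext hbx)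
    have hy : Polynomial.aeval (b : ℂ) (minpoly ℚ x) = 0 :=
      (Polynomial.mem_rootSet.mp b.2).2
    have hmp : minpoly ℚ x = minpoly ℚ (b : ℂ) := (minpoly.eq_of_root hx hy).symm
    obtain ⟨σ, hσ⟩ := my_ext_hom (algebraMap ℚ⟮x⟯ ℂ)
      ((algebraMap ℚ⟮(b : ℂ)⟯ ℂ).comp (minpoly.algEquiv hx hmp : ℚ⟮x⟯ →+* ℚ⟮(b : ℂ)⟯)) hcard
    have := hσ (AdjoinSimple.gen ℚ x)
    rw [AdjoinSimple.algebraMap_gen] at this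
    rw [h σ] at this
    simp only [RingHom.comp_apply] at this
    rw [show ((minpoly.algEquiv hx hmp : ℚ⟮x⟯ →+* ℚ⟮(b : ℂ)⟯) (AdjoinSimple.gen ℚ x))
        = AdjoinSimple.gen ℚ (b : ℂ) from minpoly.algEquiv_apply hx hmp,
      AdjoinSimple.algebraMap_gen] at this
    exact hyx this.symm
  · -- transcendental case
    have htr : Transcendental ℚ x := hx
    have hai : AlgebraicIndependent ℚ (fun _ : Unit => x) :=
      algebraicIndependent_unique_type_iff.mpr htr
    set A := IntermediateField.adjoin ℚ (Set.range fun _ : Unit => x) with hA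
    have hcard : #A < #ℂ := by
      have h1 := IntermediateField.cardinalMk_adjoin_le ℚ (Set.range fun _ : Unit => x)
      rw [mk_complex]
      refine lt_of_le_of_lt (h1.trans ?_) Cardinal.aleph0_lt_continuum
      have h2 : #(Set.range fun _ : Unit => x) ≤ ℵ₀ :=
        (Cardinal.mk_range_le).trans (by simp)
      simp only [Cardinal.mk_denumerable]
      exact sup_le (sup_le le_rfl h2) le_rfl
    letI : Algebra ℚ (FractionRing Pu) := OreLocalization.instAlgebra
    have hmap : Submonoid.map ePu.toRingEquiv.toMonoidHom (nonZeroDivisors Pu)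
        = nonZeroDivisors Pu := MulEquivClass.map_nonZeroDivisors ePu.toRingEquiv
    let β : FractionRing Pu ≃+* FractionRing Pu :=
      IsLocalization.ringEquivOfRingEquiv _ _ ePu.toRingEquiv hmap
    let E : FractionRing Pu ≃+* A := hai.aevalEquivField.toRingEquiv
    let τ : A ≃+* A := (E.symm.trans β).trans E
    obtain ⟨σ, hσ⟩ := my_ext_hom (algebraMap A ℂ) ((algebraMap A ℂ).comp τ.toRingHom) hcard
    set a₀ : A := E (algebraMap Pu (FractionRing Pu) (X ())) with ha₀def
    have ha₀ : (a₀ : ℂ) = x := by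
      rw [ha₀def]
      rw [show (E (algebraMap Pu (FractionRing Pu) (X ())) : ℂ)
        = ((hai.aevalEquivField (algebraMap Pu (FractionRing Pu) (X ())) : A) : ℂ) from rfl,
        hai.aevalEquivField_algebraMap_apply_coe]
      simp
    have hτ : ((τ a₀ : A) : ℂ) = x + 1 := by
      have h1 : τ a₀ = E (β (algebraMap Pu (FractionRing Pu) (X ()))) := by
        simp only [τ, a₀, RingEquiv.coe_trans, Function.comp_apply, RingEquiv.symm_apply_apply]
      rw [h1, IsLocalization.ringEquivOfRingEquiv_eq]
      have : ePu.toRingEquiv (X ()) = X () + 1 := ePu_X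
      rw [this]
      rw [show (E (algebraMap Pu (FractionRing Pu) (X () + 1)) : ℂ)
        = ((hai.aevalEquivField (algebraMap Pu (FractionRing Pu) (X () + 1)) : A) : ℂ) from rfl,
        hai.aevalEquivField_algebraMap_apply_coe]
      simp
    have h2 := hσ a₀
    simp only [RingHom.comp_apply, RingEquiv.toRingHom_eq_coe, RingEquiv.coe_toRingHom] at h2
    rw [show (algebraMap A ℂ) a₀ = (a₀ : A) from rfl] at h2
    -- algebraMap A ℂ a = ↑a
    have h3 : σ x = x + 1 := by
      rw [← ha₀, ← hτ] at *
      exact h2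
    rw [h σ] at h3
    simp at h3

/-- Let `V ⊆ ℂⁿ` be a complex linear subspace with `σ(V) = V` for every field
automorphism `σ` of `ℂ` (acting coordinatewise). Then `V` is spanned over `ℂ` by
`V ∩ ℚⁿ`, the set of vectors of `V` with rational coordinates. -/

theorem galois_stable_subspace_rational_span (n : ℕ)
    (V : Submodule ℂ (Fin n → ℂ))
    (hV : ∀ σ : ℂ ≃+* ℂ, (fun v : Fin n → ℂ => fun i => σ (v i)) '' (V : Set (Fin n → ℂ))
      = (V : Set (Fin n → ℂ))) :
    V = Submodule.span ℂ {v : Fin n → ℂ | v ∈ V ∧ ∀ i, ∃ q : ℚ, v i = (q : ℂ)} := by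
  classical
  set W := Submodule.span ℂ {v : Fin n → ℂ | v ∈ V ∧ ∀ i, ∃ q : ℚ, v i = (q : ℂ)} with hW
  refine le_antisymm ?_ (Submodule.span_le.mpr fun v hv => hv.1)
  -- membership of images
  have hmem : ∀ (σ : ℂ ≃+* ℂ) (z : Fin n → ℂ), z ∈ V → (fun i => σ (z i)) ∈ V := by
    intro σ z hz
    have : (fun i => σ (z i)) ∈ (fun v : Fin n → ℂ => fun i => σ (v i)) '' (V : Set (Fin n → ℂ)) :=
      Set.mem_image_of_mem _ hz
    rwa [hV σ] at this
  -- support as Finset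
  set supp : (Fin n → ℂ) → Finset (Fin n) := fun v => Finset.univ.filter (fun i => v i ≠ 0)
    with hsupp
  have hsupp_mem : ∀ v i, i ∈ supp v ↔ v i ≠ 0 := by
    intro v i; simp [hsupp]
  suffices H : ∀ k : ℕ, ∀ v, v ∈ V → (supp v).card ≤ k → v ∈ W by
    intro v hv; exact H (supp v).card v hv le_rfl
  intro k
  induction k with
  | zero =>
    intro v hv hcard
    have : v = 0 := by
      funext i
      by_contra hvi
      have : i ∈ supp v := (hsupp_mem v i).mpr hvi
      have := Finset.card_pos.mpr ⟨i, this⟩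
      omega
    rw [this]; exact W.zero_mem
  | succ k ih =>
    intro v hv hcard
    by_cases hv0 : v = 0
    · rw [hv0]; exact W.zero_mem
    -- minimal support cardinality among nonzero elements of V with support ⊆ supp v
    have hPex : ∃ m, ∃ u, u ∈ V ∧ u ≠ 0 ∧ supp u ⊆ supp v ∧ (supp u).card = m :=
      ⟨(supp v).card, v, hv, hv0, subset_rfl, rfl⟩
    set m := Nat.find hPex with hm
    obtain ⟨u, huV, hu0, husub, hucard⟩ := Nat.find_spec hPex
    have hmin : ∀ m' < m, ¬ ∃ u, u ∈ V ∧ u ≠ 0 ∧ supp u ⊆ supp v ∧ (supp u).card = m' :=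
      fun m' hm' => Nat.find_min hPex hm'
    obtain ⟨i₀, hi₀⟩ : ∃ i, u i ≠ 0 := by
      by_contra hno; push_neg at hno; exact hu0 (funext fun i => hno i)
    -- normalize
    set z : Fin n → ℂ := (u i₀)⁻¹ • u with hz
    have hzV : z ∈ V := V.smul_mem _ huV
    have hzi₀ : z i₀ = 1 := by
      simp [hz, inv_mul_cancel₀ hi₀]
    have hzsupp : supp z = supp u := by
      ext i
      simp only [hsupp_mem, hz, Pi.smul_apply, smul_eq_mul, ne_eq, mul_eq_zero, not_or]
      constructor
      · intro h'; exact h'.2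
      · intro h'; exact ⟨inv_ne_zero hi₀, h'⟩
    have hz0 : z ≠ 0 := by
      intro h'
      rw [h'] at hzi₀; simpa using hzi₀.symm
    -- z is fixed by all automorphisms
    have hzfix : ∀ σ : ℂ ≃+* ℂ, ∀ i, σ (z i) = z i := by
      intro σ
      by_contra hne
      push_neg at hne
      set d : Fin n → ℂ := (fun i => σ (z i)) - z with hd
      have hdV : d ∈ V := V.sub_mem (hmem σ z hzV) hzV
      have hd0 : d ≠ 0 := by
        obtain ⟨i, hi⟩ := hne
        intro h'
        apply hi
        have := congrFun h' i
        simp only [hd, Pi.sub_apply, Pi.zero_apply, sub_eq_zero] at this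
        exact this
      have hdsub : supp d ⊆ (supp z).erase i₀ := by
        intro i hi
        rw [hsupp_mem] at hi
        rw [Finset.mem_erase, hsupp_mem]
        constructor
        · intro hii₀; rw [hii₀] at hi
          simp [hd, hzi₀] at hi
        · intro hzi
          apply hi
          simp [hd, hzi]
      have hdsubv : supp d ⊆ supp v := by
        refine subset_trans hdsub (subset_trans (Finset.erase_subset _ _) ?_)
        rw [hzsupp]; exact husub
      have hdcard : (supp d).card < m := by
        calc (supp d).card ≤ ((supp z).erase i₀).card := Finset.card_le_card hdsub
          _ < (supp z).card := Finset.card_erase_lt_of_mem (by rw [hsupp_mem, hzi₀]; simp)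
          _ = m := by rw [hzsupp, hucard]
      exact hmin _ hdcard ⟨d, hdV, hd0, hdsubv, rfl⟩
    have hzrat : ∀ i, ∃ q : ℚ, z i = q := fun i => fixed_rational (z i) (fun σ => hzfix σ i)
    have hzW : z ∈ W := Submodule.subset_span ⟨hzV, hzrat⟩
    -- reduce v
    set v' : Fin n → ℂ := v - (v i₀) • z with hv'
    have hv'V : v' ∈ V := V.sub_mem hv (V.smul_mem _ hzV)
    have hi₀v : i₀ ∈ supp v := husub ((hsupp_mem u i₀).mpr hi₀)
    have hv'sub : supp v' ⊆ (supp v).erase i₀ := by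
      intro i hi
      rw [hsupp_mem] at hi
      rw [Finset.mem_erase, hsupp_mem]
      constructor
      · intro hii₀; rw [hii₀] at hi
        simp [hv', hzi₀] at hi
      · intro hvi
        apply hi
        have hzi : z i = 0 := by
          by_contra hzi
          have : i ∈ supp v := by
            have hmemz : i ∈ supp z := (hsupp_mem z i).mpr hzi
            rw [hzsupp] at hmemz
            exact husub hmemz
          rw [hsupp_mem] at this; exact absurd hvi this
        simp [hv', hvi, hzi]
    have hv'card : (supp v').card ≤ k := by
      calc (supp v').card ≤ ((supp v).erase i₀).card := Finset.card_le_card hv'sub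
        _ = (supp v).card - 1 := Finset.card_erase_of_mem hi₀v
        _ ≤ k := by omega
    have hv'W : v' ∈ W := ih v' hv'V hv'card
    have : v = v' + (v i₀) • z := by rw [hv', sub_add_cancel]
    rw [this]
    exact W.add_mem hv'W (W.smul_mem _ hzW)
end
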